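/- The order of any periodic subgroup of the multiplicative semigroup of n×n matrices over the tropical semiring is at most n!; that is, if 𝒢 is a subgroup of (𝕋^{n×n}, ⊗) in which every element has finite order, then 𝒢 is finite with |𝒢| ≤ n!. -/

import Mathlib

/-- The tropical (max-plus) semiring carrier: `ℝ ∪ {-∞}`, with `⊥` playing the
role of `-∞`. -/
abbrev Trop : Type := WithBot ℝ

/-- Tropical matrix multiplication: `(A ⊗ B) i j = max_k (A i k + B k j)`. -/
def tropMulMat {n m p : ℕ} (A : Matrix (Fin n) (Fin m) Trop)
    (B : Matrix (Fin m) (Fin p) Trop) : Matrix (Fin n) (Fin p) Trop :=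
  fun i j => Finset.univ.sup fun k => A i k + B k j

/-- `tropIter A k` is the `(k+1)`-st tropical power `A^(k+1)` of `A`. -/
def tropIter {n : ℕ} (A : Matrix (Fin n) (Fin n) Trop) :
    ℕ → Matrix (Fin n) (Fin n) Trop
  | 0 => A
  | k + 1 => tropMulMat A (tropIter A k)


namespace TropAux


variable {n : ℕ}

abbrev M (n : ℕ) := Matrix (Fin n) (Fin n) Trop

lemma le_mul (A B : M n) (i k j : Fin n) : A i k + B k j ≤ tropMulMat A B i j :=
  Finset.le_sup (f := fun k => A i k + B k j) (Finset.mem_univ k)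

lemma mul_le {A B : M n} {i j : Fin n} {t : Trop} (h : ∀ k, A i k + B k j ≤ t) :
    tropMulMat A B i j ≤ t :=
  Finset.sup_le fun k _ => h k

lemma exists_eq_mul (A B : M n) (i j : Fin n) : ∃ k, tropMulMat A B i j = A i k + B k j := by
  obtain ⟨k, -, hk⟩ := Finset.exists_mem_eq_sup (Finset.univ : Finset (Fin n)) ⟨i, Finset.mem_univ i⟩
    (fun k => A i k + B k j)
  exact ⟨k, hk⟩

lemma sup_add_le {f : Fin n → Trop} {c t : Trop} (hne : Nonempty (Fin n))
    (h : ∀ l, f l + c ≤ t) : Finset.univ.sup f + c ≤ t := by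
  obtain ⟨l, -, hl⟩ := Finset.exists_mem_eq_sup (Finset.univ : Finset (Fin n))
    Finset.univ_nonempty f
  rw [hl]; exact h l

lemma add_sup_le {f : Fin n → Trop} {c t : Trop} (hne : Nonempty (Fin n))
    (h : ∀ l, c + f l ≤ t) : c + Finset.univ.sup f ≤ t := by
  obtain ⟨l, -, hl⟩ := Finset.exists_mem_eq_sup (Finset.univ : Finset (Fin n))
    Finset.univ_nonempty f
  rw [hl]; exact h l

lemma mul_assoc' (A B C : M n) : tropMulMat (tropMulMat A B) C = tropMulMat A (tropMulMat B C) := by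
  funext i j
  apply le_antisymm
  · apply mul_le; intro k
    have hne : Nonempty (Fin n) := ⟨k⟩
    apply sup_add_le hne; intro l
    calc A i l + B l k + C k j = A i l + (B l k + C k j) := add_assoc _ _ _
      _ ≤ A i l + tropMulMat B C l j := add_le_add_right (le_mul _ _ _ _ _) _
      _ ≤ tropMulMat A (tropMulMat B C) i j := le_mul _ _ _ _ _
  · apply mul_le; intro l
    have hne : Nonempty (Fin n) := ⟨l⟩
    apply add_sup_le hne; intro k
    calc A i l + (B l k + C k j) = A i l + B l k + C k j := (add_assoc _ _ _).symm
      _ ≤ tropMulMat A B i k + C k j := add_le_add_left (le_mul _ _ _ _ _) _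
      _ ≤ tropMulMat (tropMulMat A B) C i j := le_mul _ _ _ _ _

lemma mul_mono {A A' B B' : M n} (hA : ∀ i j, A i j ≤ A' i j) (hB : ∀ i j, B i j ≤ B' i j)
    (i j : Fin n) : tropMulMat A B i j ≤ tropMulMat A' B' i j :=
  mul_le fun k => le_trans (add_le_add (hA i k) (hB k j)) (le_mul _ _ _ _ _)

lemma tropIter_add (A : M n) (a b : ℕ) :
    tropIter A (a + b + 1) = tropMulMat (tropIter A a) (tropIter A b) := by
  induction a with
  | zero => simp only [Nat.zero_add, tropIter]
  | succ a ih =>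
      have : a + 1 + b + 1 = (a + b + 1) + 1 := by omega
      rw [this, tropIter, ih, ← mul_assoc']
      rfl

lemma tropIter_idem {E : M n} (hEE : tropMulMat E E = E) (k : ℕ) : tropIter E k = E := by
  induction k with
  | zero => rfl
  | succ k ih => rw [tropIter, ih, hEE]

lemma tropIter_torsion_mult {A E : M n} (hEE : tropMulMat E E = E) {k : ℕ}
    (h : tropIter A k = E) (t : ℕ) : tropIter A (t * (k + 1) + k) = E := by
  induction t with
  | zero => simpa using h
  | succ t ih =>
      have harith : (t + 1) * (k + 1) + k = (t * (k + 1) + k) + k + 1 := by ring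
      rw [harith, tropIter_add, ih, h, hEE]



lemma trop_zero_pair {x y : Trop} (hx : x ≤ 0) (hy : y ≤ 0) (hxy : 0 ≤ x + y) :
    x = 0 ∧ y = 0 := by
  have h1 : 0 ≤ x := le_trans hxy (by calc x + y ≤ x + 0 := add_le_add_right hy x
                                         _ = x := add_zero x)
  have h2 : 0 ≤ y := le_trans hxy (by calc x + y ≤ 0 + y := add_le_add_left hx y
                                         _ = y := zero_add y)
  exact ⟨le_antisymm hx h1, le_antisymm hy h2⟩

lemma trop_cancel {x c : Trop} (hx : x ≠ ⊥) (h : x ≤ x + c) (hc : c ≤ 0) : c = 0 := by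
  obtain ⟨r, rfl⟩ := WithBot.ne_bot_iff_exists.mp hx
  induction c using WithBot.recBotCoe with
  | bot => simp at h
  | coe c =>
      have : (r : Trop) ≤ (r + c : ℝ) := by exact_mod_cast h
      have h1 : r ≤ r + c := by exact_mod_cast this
      have h2 : (c:ℝ) ≤ 0 := by exact_mod_cast hc
      have : (c:ℝ) = 0 := by linarith
      exact_mod_cast this

lemma trop_double_le {x : Trop} (h : x + x ≤ x) : x ≤ 0 := by
  induction x using WithBot.recBotCoe with
  | bot => exact bot_le
  | coe r =>
      have : (r + r : ℝ) ≤ r := by exact_mod_cast h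
      have : (r:ℝ) ≤ 0 := by linarith
      exact_mod_cast this





-- (k+1 factors of A along the diagonal)
lemma iter_diag_lower (A : M n) (i : Fin n) (k : ℕ) :
    k • (A i i) + A i i ≤ tropIter A k i i := by
  induction k with
  | zero => simp [tropIter]
  | succ k ih =>
      calc (k+1) • (A i i) + A i i = A i i + (k • (A i i) + A i i) := by
            rw [succ_nsmul]; abel
        _ ≤ A i i + tropIter A k i i := add_le_add_right ih _
        _ ≤ tropIter A (k+1) i i := le_mul _ _ _ _ _

lemma iter_row_lower (A : M n) (i j : Fin n) (k : ℕ) :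
    k • (A i i) + A i j ≤ tropIter A k i j := by
  induction k with
  | zero => simp [tropIter]
  | succ k ih =>
      calc (k+1) • (A i i) + A i j = A i i + (k • (A i i) + A i j) := by
            rw [succ_nsmul]; abel
        _ ≤ A i i + tropIter A k i j := add_le_add_right ih _
        _ ≤ tropIter A (k+1) i j := le_mul _ _ _ _ _

lemma diag_le_zero {A E : M n} (hEE : tropMulMat E E = E) {k : ℕ}
    (h : tropIter A k = E) (i : Fin n) : A i i ≤ 0 := by
  by_contra h0
  push_neg at h0
  obtain ⟨a, ha⟩ : ∃ a : ℝ, (a : Trop) = A i i := WithBot.ne_bot_iff_exists.mp (ne_bot_of_gt h0)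
  have hapos : (0:ℝ) < a := by
    have : (0:Trop) < (a:Trop) := ha ▸ h0
    exact_mod_cast this
  have key : ∀ t : ℕ, (((t * (k+1) + k) • a + a : ℝ) : Trop) ≤ E i i := by
    intro t
    have h1 := iter_diag_lower A i (t * (k+1) + k)
    rw [tropIter_torsion_mult hEE h t, ← ha] at h1
    calc ((((t * (k+1) + k) • a + a : ℝ)) : Trop)
        = (t * (k+1) + k) • (a : Trop) + (a : Trop) := by
          rw [WithBot.coe_add, WithBot.coe_nsmul]
      _ ≤ E i i := h1
  have hne : E i i ≠ ⊥ := by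
    intro hb
    have := key 0
    rw [hb] at this
    exact absurd this (WithBot.not_coe_le_bot _)
  obtain ⟨r, hr⟩ : ∃ r : ℝ, (r : Trop) = E i i := WithBot.ne_bot_iff_exists.mp hne
  obtain ⟨t, ht⟩ := exists_nat_gt ((r : ℝ) / a)
  have h2 : ((t * (k+1) + k) • a + a : ℝ) ≤ r := by
    have := key t; rw [← hr] at this; exact_mod_cast this
  have h3 : (t : ℝ) * a ≤ ((t * (k+1) + k) • a + a : ℝ) := by
    rw [nsmul_eq_mul]
    push_cast
    have h5 : (0:ℝ) ≤ ((t:ℝ) * k + k) * a :=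
      mul_nonneg (by positivity) hapos.le
    nlinarith [h5]
  have h4 : (r:ℝ) < t * a := by
    rw [div_lt_iff₀ hapos] at ht; linarith
  linarith





lemma E_diag_le_zero {E : M n} (hEE : tropMulMat E E = E) (i : Fin n) : E i i ≤ 0 :=
  trop_double_le (by calc E i i + E i i ≤ tropMulMat E E i i := le_mul _ _ _ _ _
                        _ = E i i := by rw [hEE])

/-- Weight of the path segment `p a → p (a+1) → ... → p b` in `A`. -/
def pweight (A : M n) (p : ℕ → Fin n) (a b : ℕ) : Trop :=
  ∑ s ∈ Finset.Ico a b, A (p s) (p (s + 1))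

lemma pweight_split (A : M n) (p : ℕ → Fin n) {a b c : ℕ} (hab : a ≤ b) (hbc : b ≤ c) :
    pweight A p a c = pweight A p a b + pweight A p b c := by
  unfold pweight
  rw [← Finset.sum_Ico_consecutive _ hab hbc]

lemma pweight_seg {E : M n} (hEE : tropMulMat E E = E) (p : ℕ → Fin n) (a : ℕ) :
    ∀ len : ℕ, pweight E p a (a + len + 1) ≤ E (p a) (p (a + len + 1)) := by
  intro len
  induction len with
  | zero =>
      unfold pweight
      rw [Finset.sum_Ico_succ_top (le_refl a), Finset.Ico_self, Finset.sum_empty, zero_add]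
  | succ len ih =>
      have h1 : a + (len + 1) + 1 = (a + len + 1) + 1 := by omega
      rw [h1]
      unfold pweight
      rw [Finset.sum_Ico_succ_top (by omega : a ≤ a + len + 1)]
      calc (∑ s ∈ Finset.Ico a (a + len + 1), E (p s) (p (s+1))) + E (p (a+len+1)) (p (a+len+2))
          ≤ E (p a) (p (a+len+1)) + E (p (a+len+1)) (p (a+len+2)) := by
            exact add_le_add_left ih _
        _ ≤ tropMulMat E E (p a) (p (a+len+2)) := le_mul _ _ _ _ _
        _ = E (p a) (p ((a+len+1) + 1)) := by rw [hEE]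

lemma exists_path (A : M n) : ∀ (k : ℕ) (i j : Fin n), ∃ p : ℕ → Fin n,
    p 0 = i ∧ p (k + 1) = j ∧ tropIter A k i j ≤ pweight A p 0 (k + 1) := by
  intro k
  induction k with
  | zero =>
      intro i j
      refine ⟨fun s => if s = 0 then i else j, rfl, rfl, ?_⟩
      unfold pweight
      simp [tropIter]
  | succ k ih =>
      intro i j
      obtain ⟨l, hl⟩ := exists_eq_mul A (tropIter A k) i j
      obtain ⟨q, hq0, hqk, hqw⟩ := ih l j
      refine ⟨fun s => if s = 0 then i else q (s - 1), rfl, by simp [hqk], ?_⟩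
      have hw : pweight A (fun s => if s = 0 then i else q (s - 1)) 0 (k + 2)
          = A i (q 0) + pweight A q 0 (k + 1) := by
        unfold pweight
        simp only [← Finset.range_eq_Ico]
        rw [Finset.sum_range_succ']
        simp only [Nat.succ_ne_zero, if_neg, Nat.succ_sub_one, if_pos, Nat.add_sub_cancel,
          reduceIte]
        exact add_comm _ _
      rw [show k + 1 + 1 = k + 2 from rfl, hw, tropIter, hl, hq0]
      exact add_le_add_right hqw _

lemma gateway {E : M n} (hEE : tropMulMat E E = E) (i j : Fin n) (hij : E i j ≠ ⊥) :
    ∃ k, E k k = 0 ∧ E i j ≤ E i k + E k j := by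
  have hIter : tropIter E n = E := tropIter_idem hEE n
  obtain ⟨p, hp0, hpn, hle⟩ := exists_path E n i j
  rw [hIter] at hle
  -- pigeonhole on p restricted to {0, ..., n} : n+1 values in Fin n
  obtain ⟨a, b, hab, hpab⟩ := Fintype.exists_ne_map_eq_of_card_lt
    (fun s : Fin (n + 1) => p s) (by simp)
  -- wlog a < b
  obtain ⟨s, t, hst, hstn, hpst⟩ : ∃ s t : ℕ, s < t ∧ t ≤ n ∧ p s = p t := by
    rcases lt_or_gt_of_ne hab with h | h
    · exact ⟨a, b, h, Nat.lt_succ_iff.mp b.isLt, hpab⟩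
    · exact ⟨b, a, h, Nat.lt_succ_iff.mp a.isLt, hpab.symm⟩
  set k := p s with hk
  have hpt : p t = k := hpst.symm
  -- split the weight
  have hsplit : pweight E p 0 (n + 1)
      = pweight E p 0 s + pweight E p s t + pweight E p t (n + 1) := by
    rw [pweight_split E p (Nat.zero_le s) (by omega : s ≤ n + 1),
        pweight_split E p (le_of_lt hst) (by omega : t ≤ n + 1)]
    rw [add_assoc]
  -- cycle bound
  have hcyc : pweight E p s t ≤ E k k := by
    have := pweight_seg hEE p s (t - s - 1)
    rw [show s + (t - s - 1) + 1 = t by omega] at this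
    rw [hpt, ← hk] at this; exact this
  -- tail bound
  have htail : pweight E p t (n + 1) ≤ E k j := by
    rcases Nat.eq_or_lt_of_le hstn with h | h
    · -- t = n : single edge? no, t ≤ n, tail length n+1-t ≥ 1 always
      have := pweight_seg hEE p t (n - t)
      rw [show t + (n - t) + 1 = n + 1 by omega, hpn, hpt] at this
      exact this
    · have := pweight_seg hEE p t (n - t)
      rw [show t + (n - t) + 1 = n + 1 by omega, hpn, hpt] at this
      exact this
  rcases Nat.eq_zero_or_pos s with hs0 | hspos
  · -- k = p 0 = i
    have hki : k = i := by rw [hk, hs0, hp0]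
    have hw0 : pweight E p 0 s = 0 := by
      rw [hs0]; unfold pweight; simp
    have hmain : E i j ≤ E k k + E i j := by
      calc E i j ≤ pweight E p 0 (n+1) := hle
        _ = 0 + pweight E p s t + pweight E p t (n+1) := by rw [hsplit, hw0]
        _ ≤ 0 + E k k + E i j := by
            refine add_le_add (add_le_add le_rfl hcyc) ?_
            rw [← hki]; exact htail
        _ = E k k + E i j := by rw [zero_add]
    have hkk : E k k = 0 := by
      refine trop_cancel hij ?_ (E_diag_le_zero hEE k)
      rwa [add_comm] at hmain
    refine ⟨k, hkk, ?_⟩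
    rw [hki] at hkk ⊢
    rw [hkk, zero_add]
  · -- s > 0
    have hhead : pweight E p 0 s ≤ E i k := by
      have := pweight_seg hEE p 0 (s - 1)
      rw [show 0 + (s - 1) + 1 = s by omega, hp0] at this
      exact this
    have hmain : E i j ≤ (E i k + E k j) + E k k := by
      calc E i j ≤ pweight E p 0 (n+1) := hle
        _ = pweight E p 0 s + pweight E p s t + pweight E p t (n+1) := hsplit
        _ ≤ E i k + E k k + E k j := add_le_add (add_le_add hhead hcyc) htail
        _ = (E i k + E k j) + E k k := by abel
    have hsub : E i k + E k j ≤ E i j := by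
      calc E i k + E k j ≤ tropMulMat E E i j := le_mul _ _ _ _ _
        _ = E i j := by rw [hEE]
    have hkk : E k k = 0 := trop_cancel hij (le_trans hmain (add_le_add_left hsub _))
      (E_diag_le_zero hEE k)
    exact ⟨k, hkk, by rw [hkk] at hmain; simpa using hmain⟩





/-! ### Critical indices and classes -/

def Crit (E : M n) : Type := {i : Fin n // E i i = 0}

instance (E : M n) : Finite (Crit E) := Subtype.finite

/-- Raw relation: same critical class. -/
def crel (E : M n) (i k : Crit E) : Prop := E i.1 k.1 + E k.1 i.1 = 0

def critSetoid (E : M n) : Setoid (Crit E) :=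
  ⟨Relation.EqvGen (crel E), Relation.EqvGen.is_equivalence _⟩

abbrev Qt (E : M n) := Quotient (critSetoid E)

instance (E : M n) : Finite (Qt E) := Quotient.finite _

lemma crel_le_zero {E : M n} (hEE : tropMulMat E E = E) (i k : Crit E) :
    E i.1 k.1 + E k.1 i.1 ≤ 0 := by
  calc E i.1 k.1 + E k.1 i.1 ≤ tropMulMat E E i.1 i.1 := le_mul _ _ _ _ _
    _ = E i.1 i.1 := by rw [hEE]
    _ = 0 := i.2

lemma crel_refl {E : M n} (i : Crit E) : crel E i i := by
  unfold crel; rw [i.2, zero_add]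

lemma crel_symm {E : M n} {i k : Crit E} (h : crel E i k) : crel E k i := by
  unfold crel at *; rwa [add_comm]

lemma crel_trans {E : M n} (hEE : tropMulMat E E = E) {i j k : Crit E}
    (h1 : crel E i j) (h2 : crel E j k) : crel E i k := by
  refine le_antisymm (crel_le_zero hEE i k) ?_
  calc (0:Trop) = (E i.1 j.1 + E j.1 i.1) + (E j.1 k.1 + E k.1 j.1) := by rw [h1, h2, add_zero]
    _ = (E i.1 j.1 + E j.1 k.1) + (E k.1 j.1 + E j.1 i.1) := by abel
    _ ≤ tropMulMat E E i.1 k.1 + tropMulMat E E k.1 i.1 :=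
        add_le_add (le_mul _ _ _ _ _) (le_mul _ _ _ _ _)
    _ = E i.1 k.1 + E k.1 i.1 := by rw [hEE]

lemma eqvGen_iff {E : M n} (hEE : tropMulMat E E = E) {i k : Crit E} :
    (critSetoid E).r i k ↔ crel E i k := by
  constructor
  · intro h
    induction h with
    | rel _ _ h => exact h
    | refl x => exact crel_refl x
    | symm _ _ _ ih => exact crel_symm ih
    | trans _ _ _ _ _ ih1 ih2 => exact crel_trans hEE ih1 ih2
  · exact Relation.EqvGen.rel _ _

/-! ### The witness relation -/

/-- `Rw E A B i k` : `k` is a witness index for row `i` in the product `A ⊗ B = E`. -/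
def Rw (E A B : M n) (i k : Crit E) : Prop := A i.1 k.1 + B k.1 i.1 = 0

lemma rw_exists {E A B : M n} (hEE : tropMulMat E E = E)
    (hAB : tropMulMat A B = E) (hBA : tropMulMat B A = E) (i : Crit E) :
    ∃ k : Crit E, Rw E A B i k := by
  obtain ⟨k, hk⟩ := exists_eq_mul A B i.1 i.1
  have hk0 : A i.1 k + B k i.1 = 0 := by rw [← hk, hAB, i.2]
  have hkcrit : E k k = 0 := by
    refine le_antisymm (E_diag_le_zero hEE k) ?_
    calc (0:Trop) = B k i.1 + A i.1 k := by rw [add_comm]; exact hk0.symm ▸ rfl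
      _ ≤ tropMulMat B A k k := le_mul _ _ _ _ _
      _ = E k k := by rw [hBA]
  exact ⟨⟨k, hkcrit⟩, hk0⟩

/-- Witnesses are well-defined on classes: equivalent sources give equivalent witnesses. -/
lemma rw_respect {E A B : M n} (hEE : tropMulMat E E = E)
    (hBA : tropMulMat B A = E)
    (hEA : tropMulMat E A = A) (hBE : tropMulMat B E = B)
    {i i' k k' : Crit E} (hii : crel E i i')
    (h : Rw E A B i k) (h' : Rw E A B i' k') : crel E k k' := by
  refine le_antisymm (crel_le_zero hEE k k') ?_
  have e1 : B k.1 i.1 + (E i.1 i'.1 + A i'.1 k'.1) ≤ E k.1 k'.1 := by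
    calc B k.1 i.1 + (E i.1 i'.1 + A i'.1 k'.1)
        ≤ B k.1 i.1 + A i.1 k'.1 := by
          refine add_le_add_right ?_ _
          calc E i.1 i'.1 + A i'.1 k'.1 ≤ tropMulMat E A i.1 k'.1 := le_mul _ _ _ _ _
            _ = A i.1 k'.1 := by rw [hEA]
      _ ≤ tropMulMat B A k.1 k'.1 := le_mul _ _ _ _ _
      _ = E k.1 k'.1 := by rw [hBA]
  have e2 : (B k'.1 i'.1 + E i'.1 i.1) + A i.1 k.1 ≤ E k'.1 k.1 := by
    calc (B k'.1 i'.1 + E i'.1 i.1) + A i.1 k.1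
        ≤ B k'.1 i.1 + A i.1 k.1 := by
          refine add_le_add_left ?_ _
          calc B k'.1 i'.1 + E i'.1 i.1 ≤ tropMulMat B E k'.1 i.1 := le_mul _ _ _ _ _
            _ = B k'.1 i.1 := by rw [hBE]
      _ ≤ tropMulMat B A k'.1 k.1 := le_mul _ _ _ _ _
      _ = E k'.1 k.1 := by rw [hBA]
  calc (0:Trop) = (A i.1 k.1 + B k.1 i.1) + ((A i'.1 k'.1 + B k'.1 i'.1)
        + (E i.1 i'.1 + E i'.1 i.1)) := by rw [h, h', hii]; simp
    _ = (B k.1 i.1 + (E i.1 i'.1 + A i'.1 k'.1)) + ((B k'.1 i'.1 + E i'.1 i.1) + A i.1 k.1) := by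
        abel
    _ ≤ E k.1 k'.1 + E k'.1 k.1 := add_le_add e1 e2


/-- Composition of witness relations. -/
lemma rw_comp {E A B A' B' : M n}
    (hAB : tropMulMat A B = E) (hA'B' : tropMulMat A' B' = E)
    (hAE : tropMulMat A E = A)
    {i k l : Crit E} (h1 : Rw E A B i k) (h2 : Rw E A' B' k l) :
    Rw E (tropMulMat A A') (tropMulMat B' B) i l := by
  have hprod : tropMulMat (tropMulMat A A') (tropMulMat B' B) = E := by
    rw [mul_assoc' A A' (tropMulMat B' B), ← mul_assoc' A' B' B, hA'B',
        ← mul_assoc' A E B]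
    rw [hAE, hAB]
  unfold Rw
  refine le_antisymm ?_ ?_
  · calc tropMulMat A A' i.1 l.1 + tropMulMat B' B l.1 i.1
        ≤ tropMulMat (tropMulMat A A') (tropMulMat B' B) i.1 i.1 := le_mul _ _ _ _ _
      _ = E i.1 i.1 := by rw [hprod]
      _ = 0 := i.2
  · calc (0:Trop) = (A i.1 k.1 + B k.1 i.1) + (A' k.1 l.1 + B' l.1 k.1) := by
          rw [h1, h2, add_zero]
      _ = (A i.1 k.1 + A' k.1 l.1) + (B' l.1 k.1 + B k.1 i.1) := by abel
      _ ≤ tropMulMat A A' i.1 l.1 + tropMulMat B' B l.1 i.1 :=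
          add_le_add (le_mul _ _ _ _ _) (le_mul _ _ _ _ _)

/-- The kernel lemma: a torsion element whose witness permutation is the identity
equals `E`. -/
lemma kernel_eq {E P Q : M n} (hEE : tropMulMat E E = E)
    (hPQ : tropMulMat P Q = E) (hQP : tropMulMat Q P = E)
    (hEP : tropMulMat E P = P) (hPE : tropMulMat P E = P)
    (hEQ : tropMulMat E Q = Q)
    (hPt : ∃ k, tropIter P k = E) (hQt : ∃ k, tropIter Q k = E)
    (hid : ∀ i k : Crit E, Rw E P Q i k → crel E i k) : P = E := by
  -- Step 1: diagonal entries at critical indices are 0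
  have hdiag : ∀ i : Crit E, P i.1 i.1 = 0 ∧ Q i.1 i.1 = 0 := by
    intro i
    obtain ⟨k, hk⟩ := rw_exists hEE hPQ hQP i
    have hik : crel E i k := hid i k hk
    have e1 : P i.1 k.1 + E k.1 i.1 ≤ P i.1 i.1 := by
      calc P i.1 k.1 + E k.1 i.1 ≤ tropMulMat P E i.1 i.1 := le_mul _ _ _ _ _
        _ = P i.1 i.1 := by rw [hPE]
    have e2 : E i.1 k.1 + Q k.1 i.1 ≤ Q i.1 i.1 := by
      calc E i.1 k.1 + Q k.1 i.1 ≤ tropMulMat E Q i.1 i.1 := le_mul _ _ _ _ _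
        _ = Q i.1 i.1 := by rw [hEQ]
    have hsum : (0:Trop) ≤ P i.1 i.1 + Q i.1 i.1 := by
      calc (0:Trop) = (P i.1 k.1 + Q k.1 i.1) + (E i.1 k.1 + E k.1 i.1) := by
            rw [hk, hik, add_zero]
        _ = (P i.1 k.1 + E k.1 i.1) + (E i.1 k.1 + Q k.1 i.1) := by abel
        _ ≤ P i.1 i.1 + Q i.1 i.1 := add_le_add e1 e2
    obtain ⟨kP, hkP⟩ := hPt
    obtain ⟨kQ, hkQ⟩ := hQt
    exact trop_zero_pair (diag_le_zero hEE hkP i.1) (diag_le_zero hEE hkQ i.1) hsum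
  -- Step 2: critical rows are dominated by E
  have hrow : ∀ (X : M n), (∀ i : Crit E, X i.1 i.1 = 0) → (∃ k, tropIter X k = E) →
      ∀ (i : Crit E) (j : Fin n), X i.1 j ≤ E i.1 j := by
    intro X hXdiag hXt i j
    obtain ⟨k, hk⟩ := hXt
    have := iter_row_lower X i.1 j k
    rw [hk, hXdiag i, smul_zero, zero_add] at this
    exact this
  -- Step 3: all entries dominated by E
  have hall : ∀ (X : M n), tropMulMat E X = X → (∀ i : Crit E, X i.1 i.1 = 0) →
      (∃ k, tropIter X k = E) → ∀ i j, X i j ≤ E i j := by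
    intro X hEX hXdiag hXt i j
    rw [← hEX]
    refine mul_le fun k => ?_
    by_cases hb : E i k = ⊥
    · rw [hb, WithBot.bot_add]; exact bot_le
    · obtain ⟨k', hk'c, hk'⟩ := gateway hEE i k hb
      calc E i k + X k j ≤ (E i k' + E k' k) + X k j := add_le_add_left hk' _
        _ = E i k' + (E k' k + X k j) := add_assoc _ _ _
        _ ≤ E i k' + tropMulMat E X k' j := add_le_add_right (le_mul _ _ _ _ _) _
        _ = E i k' + X k' j := by rw [hEX]
        _ ≤ E i k' + E k' j := add_le_add_right (hrow X hXdiag hXt ⟨k', hk'c⟩ j) _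
        _ ≤ tropMulMat E E i j := le_mul _ _ _ _ _
        _ = E i j := by rw [hEE]
  have hPle : ∀ i j, P i j ≤ E i j := hall P hEP (fun i => (hdiag i).1) hPt
  have hQle : ∀ i j, Q i j ≤ E i j := hall Q hEQ (fun i => (hdiag i).2) hQt
  -- Step 4: conclude
  funext i j
  refine le_antisymm (hPle i j) ?_
  calc E i j = tropMulMat P Q i j := by rw [hPQ]
    _ ≤ tropMulMat P E i j := by
        refine mul_le fun k => ?_
        exact le_trans (add_le_add_right (hQle k j) _) (le_mul _ _ _ _ _)
    _ = P i j := by rw [hPE]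


/-! ### The permutation attached to a group element -/

open Classical in
noncomputable def sigmaFun (E A B : M n) : Crit E → Crit E :=
  fun i => if h : ∃ k : Crit E, Rw E A B i k then h.choose else i

lemma sigmaFun_spec {E A B : M n} (hEE : tropMulMat E E = E)
    (hAB : tropMulMat A B = E) (hBA : tropMulMat B A = E) (i : Crit E) :
    Rw E A B i (sigmaFun E A B i) := by
  have h : ∃ k : Crit E, Rw E A B i k := rw_exists hEE hAB hBA i
  unfold sigmaFun
  rw [dif_pos h]
  exact h.choose_spec

noncomputable def sigmaPerm (E A B : M n) (hEE : tropMulMat E E = E)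
    (hAB : tropMulMat A B = E) (hBA : tropMulMat B A = E)
    (hEA : tropMulMat E A = A) (hAE : tropMulMat A E = A)
    (hEB : tropMulMat E B = B) (hBE : tropMulMat B E = B) :
    Equiv.Perm (Qt E) where
  toFun := Quotient.map (sigmaFun E A B) (fun i i' hii => by
    refine (eqvGen_iff hEE).mpr ?_
    exact rw_respect hEE hBA hEA hBE ((eqvGen_iff hEE).mp hii)
      (sigmaFun_spec hEE hAB hBA i) (sigmaFun_spec hEE hAB hBA i'))
  invFun := Quotient.map (sigmaFun E B A) (fun i i' hii => by
    refine (eqvGen_iff hEE).mpr ?_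
    exact rw_respect hEE hAB hEB hAE ((eqvGen_iff hEE).mp hii)
      (sigmaFun_spec hEE hBA hAB i) (sigmaFun_spec hEE hBA hAB i'))
  left_inv := by
    refine Quotient.ind fun i => ?_
    simp only [Quotient.map_mk]
    refine Quotient.sound ?_
    refine (eqvGen_iff hEE).mpr ?_
    have h1 := sigmaFun_spec hEE hAB hBA i
    have h2 := sigmaFun_spec hEE hBA hAB (sigmaFun E A B i)
    have h3 := rw_comp hAB hBA hAE h1 h2
    rw [hAB] at h3
    exact crel_symm h3
  right_inv := by
    refine Quotient.ind fun i => ?_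
    simp only [Quotient.map_mk]
    refine Quotient.sound ?_
    refine (eqvGen_iff hEE).mpr ?_
    have h1 := sigmaFun_spec hEE hBA hAB i
    have h2 := sigmaFun_spec hEE hAB hBA (sigmaFun E B A i)
    have h3 := rw_comp hBA hAB hBE h1 h2
    rw [hBA] at h3
    exact crel_symm h3

end TropAux

open TropAux in
theorem periodic_subgroup_card_le_factorial {n : ℕ}
    (S : Set (Matrix (Fin n) (Fin n) Trop))
    (hclosed : ∀ A ∈ S, ∀ B ∈ S, tropMulMat A B ∈ S)
    (E : Matrix (Fin n) (Fin n) Trop) (hE : E ∈ S)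
    (hEneut : ∀ A ∈ S, tropMulMat E A = A ∧ tropMulMat A E = A)
    (hinv : ∀ A ∈ S, ∃ B ∈ S, tropMulMat A B = E ∧ tropMulMat B A = E)
    (hper : ∀ A ∈ S, ∃ k : ℕ, tropIter A k = E) :
    S.Finite ∧ S.ncard ≤ Nat.factorial n := by
  classical
  have hEE : tropMulMat E E = E := (hEneut E hE).1
  choose Bi hBiS hABi hBAi using hinv
  -- the map from S to permutations of critical classes
  let F : ↥S → Equiv.Perm (Qt E) := fun As =>
    sigmaPerm E As.1 (Bi As.1 As.2) hEE (hABi As.1 As.2) (hBAi As.1 As.2)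
      (hEneut As.1 As.2).1 (hEneut As.1 As.2).2
      (hEneut _ (hBiS As.1 As.2)).1 (hEneut _ (hBiS As.1 As.2)).2
  have hFinj : Function.Injective F := by
    rintro ⟨A₁, h₁⟩ ⟨A₂, h₂⟩ hF
    set B₁ := Bi A₁ h₁ with hB₁
    set B₂ := Bi A₂ h₂ with hB₂
    have hB₁S : B₁ ∈ S := hBiS A₁ h₁
    have hB₂S : B₂ ∈ S := hBiS A₂ h₂
    have hPmem : tropMulMat A₁ B₂ ∈ S := hclosed A₁ h₁ B₂ hB₂S
    have hQmem : tropMulMat A₂ B₁ ∈ S := hclosed A₂ h₂ B₁ hB₁S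
    -- P ⊗ Q = E and Q ⊗ P = E
    have hPQ : tropMulMat (tropMulMat A₁ B₂) (tropMulMat A₂ B₁) = E := by
      rw [mul_assoc', ← mul_assoc' B₂ A₂ B₁, hBAi A₂ h₂, (hEneut B₁ hB₁S).1, hABi A₁ h₁]
    have hQP : tropMulMat (tropMulMat A₂ B₁) (tropMulMat A₁ B₂) = E := by
      rw [mul_assoc', ← mul_assoc' B₁ A₁ B₂, hBAi A₁ h₁, (hEneut B₂ hB₂S).1, hABi A₂ h₂]
    -- the witness permutation of P is the identity
    have hid : ∀ i k : Crit E, Rw E (tropMulMat A₁ B₂) (tropMulMat A₂ B₁) i k →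
        crel E i k := by
      intro i k hk
      have h1 := sigmaFun_spec hEE (hABi A₁ h₁) (hBAi A₁ h₁) i
      have h2 := sigmaFun_spec hEE (hABi A₂ h₂) (hBAi A₂ h₂) i
      set k₁ := sigmaFun E A₁ B₁ i with hk₁
      set k₂ := sigmaFun E A₂ B₂ i with hk₂
      have hk₁₂ : crel E k₁ k₂ := by
        have := DFunLike.congr_fun hF (Quotient.mk (critSetoid E) i)
        simp only [F, sigmaPerm, Equiv.coe_fn_mk, Quotient.map_mk] at this
        exact (eqvGen_iff hEE).mp (Quotient.exact this)
      have h2' : Rw E B₂ A₂ k₂ i := by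
        unfold Rw at h2 ⊢; rwa [add_comm]
      obtain ⟨l, hl⟩ := rw_exists hEE (hBAi A₂ h₂) (hABi A₂ h₂) k₁
      have hil : Rw E (tropMulMat A₁ B₂) (tropMulMat A₂ B₁) i l :=
        rw_comp (hABi A₁ h₁) (hBAi A₂ h₂) (hEneut A₁ h₁).2 h1 hl
      have hkl : crel E k l :=
        rw_respect hEE hQP (hEneut _ hPmem).1 (hEneut _ hQmem).2 (crel_refl i) hk hil
      have hli : crel E l i :=
        rw_respect hEE (hABi A₂ h₂) (hEneut B₂ hB₂S).1 (hEneut A₂ h₂).2 hk₁₂ hl h2'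
      exact crel_symm (crel_trans hEE hkl hli)
    -- hence P = E
    have hPE : tropMulMat A₁ B₂ = E :=
      kernel_eq hEE hPQ hQP (hEneut _ hPmem).1 (hEneut _ hPmem).2 (hEneut _ hQmem).1
        (hper _ hPmem) (hper _ hQmem) hid
    have : A₁ = A₂ := by
      calc A₁ = tropMulMat A₁ E := ((hEneut A₁ h₁).2).symm
        _ = tropMulMat A₁ (tropMulMat B₂ A₂) := by rw [hBAi A₂ h₂]
        _ = tropMulMat (tropMulMat A₁ B₂) A₂ := (mul_assoc' _ _ _).symm
        _ = tropMulMat E A₂ := by rw [hPE]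
        _ = A₂ := (hEneut A₂ h₂).1
    exact Subtype.ext this
  have hFinS : Finite ↥S := Finite.of_injective F hFinj
  refine ⟨Set.toFinite S, ?_⟩
  letI : Fintype (Qt E) := Fintype.ofFinite _
  have hQle : Nat.card (Qt E) ≤ n := by
    have h1 : Nat.card (Qt E) ≤ Nat.card (Crit E) :=
      Nat.card_le_card_of_surjective (Quotient.mk (critSetoid E)) Quotient.mk_surjective
    have h2 : Nat.card (Crit E) ≤ Nat.card (Fin n) :=
      Nat.card_le_card_of_injective (Subtype.val : Crit E → Fin n) Subtype.val_injective
    simpa [Nat.card_eq_fintype_card] using le_trans h1 h2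
  calc S.ncard = Nat.card ↥S := (Nat.card_coe_set_eq S).symm
    _ ≤ Nat.card (Equiv.Perm (Qt E)) := Nat.card_le_card_of_injective F hFinj
    _ = (Nat.card (Qt E)).factorial := by
        rw [Nat.card_eq_fintype_card, Nat.card_eq_fintype_card, Fintype.card_perm]
    _ ≤ Nat.factorial n := Nat.factorial_le hQle
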